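/- Let $h$ be non-negative, supermultiplicative (i.e., $h(xy)\ge h(x)h(y)$ for all $x,y$ in its domain), $f:I\to(0,\infty)$ be $A_tG_h$-convex with $0\in I$ and $f(0)=1$. Then for all $x,y\in I$ and all $\alpha,\beta>0$ with $\alpha+\beta\le 1$: $f(\alpha x+\beta y)\le f(x)^{h(\alpha)} f(y)^{h(\beta)}$. -/

import Mathlib

open Real Set

theorem AtGh_functional_inequality (I : Set ℝ) (h0 : (0:ℝ) ∈ I) (hIconv : Convex ℝ I)
    (h : ℝ → ℝ) (hpos : ∀ t ∈ Icc (0:ℝ) 1, 0 < h t)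
    (hsuper : ∀ x ∈ Ioc (0:ℝ) 1, ∀ y ∈ Ioc (0:ℝ) 1, h x * h y ≤ h (x * y))
    (f : ℝ → ℝ) (hfpos : ∀ x ∈ I, 0 < f x) (hf0 : f 0 = 1)
    (hconv : ∀ a ∈ I, ∀ b ∈ I, ∀ t ∈ Icc (0:ℝ) 1,
      f (t * a + (1 - t) * b) ≤ f a ^ h t * f b ^ h (1 - t)) :
    ∀ x ∈ I, ∀ y ∈ I, ∀ α β : ℝ, 0 < α → 0 < β → α + β ≤ 1 →
      f (α * x + β * y) ≤ f x ^ h α * f y ^ h β := by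
  -- First: f ≥ 1 on I
  have hge1 : ∀ a ∈ I, 1 ≤ f a := by
    intro a ha
    have := hconv a ha 0 h0 0 ⟨le_refl 0, zero_le_one⟩
    simp [hf0] at this
    -- this : 1 ≤ f a ^ h 0
    by_contra hlt
    push_neg at hlt
    have h0pos : 0 < h 0 := hpos 0 ⟨le_refl 0, zero_le_one⟩
    have : f a ^ h 0 < 1 := Real.rpow_lt_one (hfpos a ha).le hlt h0pos
    linarith
  intro x hx y hy α β hα hβ hαβ
  set s : ℝ := α + β with hs
  have hspos : 0 < s := by positivity
  set t : ℝ := α / s with ht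
  have htpos : 0 < t := by positivity
  have ht1 : t < 1 := by
    rw [ht, div_lt_one hspos]; linarith
  have h1t : (1 : ℝ) - t = β / s := by
    rw [ht, hs]; field_simp; ring
  set z : ℝ := t * x + (1 - t) * y with hz
  have hzI : z ∈ I := by
    have := hIconv hx hy htpos.le (by linarith : (0:ℝ) ≤ 1 - t) (by ring)
    simpa [smul_eq_mul] using this
  have key : α * x + β * y = s * z + (1 - s) * 0 := by
    rw [hz, ht, h1t]; field_simp; ring
  have hsIcc : s ∈ Icc (0:ℝ) 1 := ⟨hspos.le, hαβ⟩
  have step1 : f (α * x + β * y) ≤ f z ^ h s := by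
    rw [key]
    have := hconv z hzI 0 h0 s hsIcc
    simpa [hf0] using this
  have step2 : f z ≤ f x ^ h t * f y ^ h (1 - t) :=
    hconv x hx y hy t ⟨htpos.le, ht1.le⟩
  have hhs : 0 < h s := hpos s hsIcc
  have hht : 0 < h t := hpos t ⟨htpos.le, ht1.le⟩
  have hh1t : 0 < h (1 - t) := hpos (1 - t) ⟨by linarith, by linarith⟩
  have hfx := hfpos x hx
  have hfy := hfpos y hy
  have step3 : f z ^ h s ≤ (f x ^ h t * f y ^ h (1 - t)) ^ h s :=
    Real.rpow_le_rpow (hfpos z hzI).le step2 hhs.le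
  have step4 : (f x ^ h t * f y ^ h (1 - t)) ^ h s
      = f x ^ (h t * h s) * f y ^ (h (1 - t) * h s) := by
    rw [Real.mul_rpow (by positivity) (by positivity),
      ← Real.rpow_mul hfx.le, ← Real.rpow_mul hfy.le]
  have hmul1 : h t * h s ≤ h α := by
    have := hsuper t ⟨htpos, ht1.le⟩ s ⟨hspos, hαβ⟩
    have hts : t * s = α := by rw [ht]; field_simp
    rwa [hts] at this
  have hmul2 : h (1 - t) * h s ≤ h β := by
    have := hsuper (1 - t) ⟨by linarith, by linarith⟩ s ⟨hspos, hαβ⟩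
    have hts : (1 - t) * s = β := by rw [h1t]; field_simp
    rwa [hts] at this
  have step5 : f x ^ (h t * h s) ≤ f x ^ h α :=
    Real.rpow_le_rpow_of_exponent_le (hge1 x hx) hmul1
  have step6 : f y ^ (h (1 - t) * h s) ≤ f y ^ h β :=
    Real.rpow_le_rpow_of_exponent_le (hge1 y hy) hmul2
  calc f (α * x + β * y) ≤ f z ^ h s := step1
    _ ≤ f x ^ (h t * h s) * f y ^ (h (1 - t) * h s) := by rw [← step4]; exact step3
    _ ≤ f x ^ h α * f y ^ h β :=
        mul_le_mul step5 step6 (by positivity) (by positivity)
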